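/- Let X = {0,1}^{d−1} × {0} ⊂ ℝ^d, and let x' = (a,…,a,b) ∈ ℝ^d where 0 < a < 1 and b is arbitrary. Then for any two distinct points y, z ∈ X with y ≠ 0 and z ≠ 0, the inner product ⟨x' − y, z − y⟩ is strictly positive; consequently the angle at y in the triangle x' y z is acute. -/

import Mathlib

open scoped InnerProductSpace

/-- The vertex set `{0,1}^(d-1) × {0}` of the `(d-1)`-dimensional unit hypercube
embedded in `ℝ^d` with last coordinate `0`. -/
def hypercube (d : ℕ) : Set (EuclideanSpace ℝ (Fin d)) :=
  {v | ∀ i : Fin d, if (i : ℕ) = d - 1 then v i = 0 else v i = 0 ∨ v i = 1}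

/-- Let `x' = (a,…,a,b) ∈ ℝ^d` with `0 < a < 1` and `b` arbitrary.  For any two distinct
nonzero vertices `y, z` of the hypercube `X = {0,1}^(d-1) × {0}`, the inner product
`⟪x' - y, z - y⟫` is strictly positive; consequently the angle at `y` in the triangle
`x' y z` is acute. -/
theorem inner_pos_at_cube_vertex (d : ℕ) (hd : 2 ≤ d) (a b : ℝ)
    (ha : 0 < a) (ha1 : a < 1)
    (x' : EuclideanSpace ℝ (Fin d))
    (hx' : ∀ i : Fin d, x' i = if (i : ℕ) = d - 1 then b else a) :
    ∀ y ∈ hypercube d, ∀ z ∈ hypercube d, y ≠ 0 → z ≠ 0 → y ≠ z →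
      0 < ⟪x' - y, z - y⟫_ℝ ∧
      EuclideanGeometry.angle x' y z < Real.pi / 2 := by
  intro y hy z hz hy0 hz0 hyz
  have hinner : 0 < ⟪x' - y, z - y⟫_ℝ := by
    rw [PiLp.inner_apply]
    -- find a coordinate where y and z differ; it is not the last one
    obtain ⟨i, hi⟩ : ∃ i, y i ≠ z i := by
      by_contra h
      push_neg at h
      exact hyz (PiLp.ext h)
    have hilast : (i : ℕ) ≠ d - 1 := by
      intro h
      have h1 := hy i
      have h2 := hz i
      rw [if_pos h] at h1 h2
      exact hi (h1.trans h2.symm)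
    have key : ∀ j : Fin d, 0 ≤ (x' - y) j * (z - y) j := by
      intro j
      have hsub : (x' - y) j = x' j - y j := rfl
      have hsub' : (z - y) j = z j - y j := rfl
      rw [hsub, hsub', hx' j]
      by_cases hj : (j : ℕ) = d - 1
      · have h1 := hy j; have h2 := hz j
        rw [if_pos hj] at h1 h2
        simp [h1, h2]
      · rw [if_neg hj]
        have h1 := hy j; have h2 := hz j
        rw [if_neg hj] at h1 h2
        rcases h1 with h1 | h1 <;> rcases h2 with h2 | h2 <;>
          rw [h1, h2] <;> nlinarith
    have keyi : 0 < (x' - y) i * (z - y) i := by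
      have hsub : (x' - y) i = x' i - y i := rfl
      have hsub' : (z - y) i = z i - y i := rfl
      rw [hsub, hsub', hx' i, if_neg hilast]
      have h1 := hy i; have h2 := hz i
      rw [if_neg hilast] at h1 h2
      rcases h1 with h1 | h1 <;> rcases h2 with h2 | h2 <;>
        rw [h1, h2] <;> simp_all <;> nlinarith
    have := Finset.sum_pos' (fun j _ => key j) ⟨i, Finset.mem_univ i, keyi⟩
    simpa [RCLike.inner_apply, mul_comm] using this
  refine ⟨hinner, ?_⟩
  have hx'y : x' - y ≠ 0 := by
    intro h
    rw [h, inner_zero_left] at hinner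
    exact lt_irrefl 0 hinner
  have hzy : z - y ≠ 0 := by
    intro h
    rw [h, inner_zero_right] at hinner
    exact lt_irrefl 0 hinner
  rw [EuclideanGeometry.angle, vsub_eq_sub, vsub_eq_sub,
    InnerProductGeometry.angle, Real.arccos_lt_pi_div_two]
  exact div_pos hinner (mul_pos (norm_pos_iff.mpr hx'y) (norm_pos_iff.mpr hzy))
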